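/- Let D ⊂ ℝ² be an open set, 0 < λ₁ < λ₂ < 1, and let u : D × [λ₁, λ₂] → ℝ be continuous, twice continuously differentiable in (x,y) with all these partial derivatives jointly continuous in (x,y,λ), and suppose that for every (x,y) ∈ D and λ ∈ [λ₁, λ₂]: λ·( ∂²u/∂x² + ∂²u/∂y² )(x,y,λ) = ∂²u/∂y²(x,y,λ). Let σ : [λ₁, λ₂] → ℝ be continuous. Then the function p(x,y,t) := ∫_{λ₁}^{λ₂} cos(√λ · t)·σ(λ)·u(x,y,λ) dλ is a classical solution of the Poincaré–Sobolev equation on D × ℝ: ∂²/∂t² ( ∂²p/∂x² + ∂²p/∂y² ) + ∂²p/∂y² = 0. -/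

import Mathlib

open MeasureTheory intervalIntegral Set Metric

lemma deriv_under_int (a b : ℝ) (hab : a ≤ b) (f f' : ℝ → ℝ → ℝ) (x₀ ε : ℝ)
    (hf : ContinuousOn (fun p : ℝ × ℝ => f p.1 p.2) (closedBall x₀ ε ×ˢ Icc a b))
    (hf' : ContinuousOn (fun p : ℝ × ℝ => f' p.1 p.2) (closedBall x₀ ε ×ˢ Icc a b))
    (hd : ∀ l ∈ Icc a b, ∀ x ∈ ball x₀ ε, HasDerivAt (fun x => f x l) (f' x l) x) :
    ∀ x ∈ ball x₀ ε,
      HasDerivAt (fun x => ∫ l in a..b, f x l) (∫ l in a..b, f' x l) x := by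
  intro x hx
  have hιIcc : Set.uIoc a b ⊆ Icc a b := by rw [uIoc_of_le hab]; exact Ioc_subset_Icc_self
  set δ : ℝ := ε - dist x x₀ with hδdef
  have hδ : 0 < δ := by simp only [hδdef]; linarith [mem_ball.1 hx]
  have hsub : ball x δ ⊆ ball x₀ ε := by
    intro y hy
    have := mem_ball.1 hy
    exact mem_ball.2 (lt_of_le_of_lt (dist_triangle y x x₀) (by linarith))
  obtain ⟨C, hC⟩ : ∃ C, ∀ p ∈ closedBall x₀ ε ×ˢ Icc a b, ‖f' p.1 p.2‖ ≤ C :=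
    ((isCompact_closedBall x₀ ε).prod isCompact_Icc).exists_bound_of_continuousOn hf'
  have hmemC : ∀ y ∈ ball x₀ ε, ∀ l ∈ Icc a b, ((y, l) : ℝ × ℝ) ∈ closedBall x₀ ε ×ˢ Icc a b :=
    fun y hy l hl => ⟨ball_subset_closedBall hy, hl⟩
  have key := intervalIntegral.hasDerivAt_integral_of_dominated_loc_of_deriv_le
    (F := fun x l => f x l) (F' := fun x l => f' x l) (x₀ := x) (a := a) (b := b)
    (μ := volume) (bound := fun _ => C) (ball_mem_nhds x hδ)
    ?_ ?_ ?_ ?_ ?_ ?_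
  · exact key.2
  · filter_upwards [isOpen_ball.mem_nhds (mem_ball_self hδ)] with y hy
    have : ContinuousOn (fun l => f y l) (Icc a b) :=
      hf.comp (Continuous.continuousOn (by fun_prop)) fun l hl => hmemC y (hsub hy) l hl
    exact (this.mono hιIcc).aestronglyMeasurable measurableSet_uIoc
  · apply ContinuousOn.intervalIntegrable
    rw [uIcc_of_le hab]
    exact hf.comp (Continuous.continuousOn (by fun_prop))
      fun l hl => hmemC x hx l hl
  · have : ContinuousOn (fun l => f' x l) (Icc a b) :=
      hf'.comp (Continuous.continuousOn (by fun_prop)) fun l hl => hmemC x hx l hl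
    exact (this.mono hιIcc).aestronglyMeasurable measurableSet_uIoc
  · refine Filter.Eventually.of_forall fun l hl y hy => ?_
    exact hC _ (hmemC y (hsub hy) l (hιIcc hl))
  · exact intervalIntegrable_const
  · exact Filter.Eventually.of_forall fun l hl y hy => hd l (hιIcc hl) y (hsub hy)

lemma second_deriv_param (a b : ℝ) (hab : a ≤ b) (C : ℝ → ℝ) (g : ℝ → ℝ → ℝ)
    (x₀ ε : ℝ) (hε : 0 < ε)
    (hCc : ContinuousOn C (Icc a b))
    (hg : ContinuousOn (fun p : ℝ × ℝ => g p.1 p.2) (closedBall x₀ ε ×ˢ Icc a b))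
    (hg1 : ContinuousOn (fun p : ℝ × ℝ => deriv (fun x => g x p.2) p.1)
      (closedBall x₀ ε ×ˢ Icc a b))
    (hg2 : ContinuousOn (fun p : ℝ × ℝ => iteratedDeriv 2 (fun x => g x p.2) p.1)
      (closedBall x₀ ε ×ˢ Icc a b))
    (hreg : ∀ l ∈ Icc a b, ContDiffOn ℝ 2 (fun x => g x l) (ball x₀ ε)) :
    iteratedDeriv 2 (fun x => ∫ l in a..b, C l * g x l) x₀
      = ∫ l in a..b, C l * iteratedDeriv 2 (fun x => g x l) x₀ := by
  have hCc' : ContinuousOn (fun p : ℝ × ℝ => C p.2) (closedBall x₀ ε ×ˢ Icc a b) :=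
    hCc.comp continuous_snd.continuousOn fun p hp => hp.2
  have hf : ContinuousOn (fun p : ℝ × ℝ => C p.2 * g p.1 p.2) (closedBall x₀ ε ×ˢ Icc a b) :=
    hCc'.mul hg
  have hf1 : ContinuousOn (fun p : ℝ × ℝ => C p.2 * deriv (fun x => g x p.2) p.1)
      (closedBall x₀ ε ×ˢ Icc a b) := hCc'.mul hg1
  have hf2 : ContinuousOn (fun p : ℝ × ℝ => C p.2 * iteratedDeriv 2 (fun x => g x p.2) p.1)
      (closedBall x₀ ε ×ˢ Icc a b) := hCc'.mul hg2
  have hd1 : ∀ l ∈ Icc a b, ∀ x ∈ ball x₀ ε,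
      HasDerivAt (fun x => C l * g x l) (C l * deriv (fun x => g x l) x) x := by
    intro l hl x hx
    have : DifferentiableAt ℝ (fun x => g x l) x :=
      ((hreg l hl).differentiableOn (by norm_num)).differentiableAt
        (isOpen_ball.mem_nhds hx)
    exact this.hasDerivAt.const_mul (C l)
  have hd2 : ∀ l ∈ Icc a b, ∀ x ∈ ball x₀ ε,
      HasDerivAt (fun x => C l * deriv (fun x => g x l) x)
        (C l * iteratedDeriv 2 (fun x => g x l) x) x := by
    intro l hl x hx
    have hder : ContDiffOn ℝ 1 (deriv (fun x => g x l)) (ball x₀ ε) :=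
      (hreg l hl).deriv_of_isOpen isOpen_ball (by norm_num)
    have : DifferentiableAt ℝ (deriv (fun x => g x l)) x :=
      (hder.differentiableOn one_ne_zero).differentiableAt (isOpen_ball.mem_nhds hx)
    have h2 := this.hasDerivAt.const_mul (C l)
    rwa [iteratedDeriv_succ, iteratedDeriv_one]
  have h1 := deriv_under_int a b hab (fun x l => C l * g x l)
    (fun x l => C l * deriv (fun x => g x l) x) x₀ ε hf hf1 hd1
  have h2 := deriv_under_int a b hab (fun x l => C l * deriv (fun x => g x l) x)
    (fun x l => C l * iteratedDeriv 2 (fun x => g x l) x) x₀ ε hf1 hf2 hd2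
  rw [iteratedDeriv_succ, iteratedDeriv_one]
  have heq : deriv (fun x => ∫ l in a..b, C l * g x l)
      =ᶠ[nhds x₀] fun x => ∫ l in a..b, C l * deriv (fun x => g x l) x := by
    filter_upwards [isOpen_ball.mem_nhds (mem_ball_self hε)] with y hy
    exact (h1 y hy).deriv
  rw [heq.deriv_eq]
  exact (h2 x₀ (mem_ball_self hε)).deriv

lemma second_deriv_time (a b : ℝ) (hab : a ≤ b) (ha : 0 ≤ a)
    (c : ℝ → ℝ) (hc : ContinuousOn c (Icc a b)) (t : ℝ) :
    iteratedDeriv 2 (fun s => ∫ l in a..b, Real.cos (Real.sqrt l * s) * c l) t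
      = ∫ l in a..b, -(l * (Real.cos (Real.sqrt l * t) * c l)) := by
  have hc' : ∀ t₀ : ℝ, ContinuousOn (fun p : ℝ × ℝ => c p.2)
      (closedBall t₀ 1 ×ˢ Icc a b) := fun t₀ =>
    hc.comp continuous_snd.continuousOn fun p hp => hp.2
  have hcos : Continuous fun p : ℝ × ℝ => Real.cos (Real.sqrt p.2 * p.1) := by fun_prop
  have hsin : Continuous fun p : ℝ × ℝ => -Real.sin (Real.sqrt p.2 * p.1) * Real.sqrt p.2 := by
    fun_prop
  have hcos2 : Continuous fun p : ℝ × ℝ =>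
      -(Real.cos (Real.sqrt p.2 * p.1) * Real.sqrt p.2) * Real.sqrt p.2 := by fun_prop
  have hd1 : ∀ t₀ : ℝ, ∀ l ∈ Icc a b, ∀ s ∈ ball t₀ 1,
      HasDerivAt (fun s => Real.cos (Real.sqrt l * s) * c l)
        ((-Real.sin (Real.sqrt l * s) * Real.sqrt l) * c l) s := by
    intro t₀ l hl s hs
    have hsq : HasDerivAt (fun s : ℝ => Real.sqrt l * s) (Real.sqrt l) s := by
      simpa using (hasDerivAt_id s).const_mul (Real.sqrt l)
    exact ((Real.hasDerivAt_cos (Real.sqrt l * s)).comp s hsq).mul_const (c l)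
  have hd2 : ∀ t₀ : ℝ, ∀ l ∈ Icc a b, ∀ s ∈ ball t₀ 1,
      HasDerivAt (fun s => (-Real.sin (Real.sqrt l * s) * Real.sqrt l) * c l)
        ((-(Real.cos (Real.sqrt l * s) * Real.sqrt l) * Real.sqrt l) * c l) s := by
    intro t₀ l hl s hs
    have hsq : HasDerivAt (fun s : ℝ => Real.sqrt l * s) (Real.sqrt l) s := by
      simpa using (hasDerivAt_id s).const_mul (Real.sqrt l)
    have := (((Real.hasDerivAt_sin (Real.sqrt l * s)).comp s hsq).neg.mul_const
      (Real.sqrt l)).mul_const (c l)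
    exact this
  have h1 : ∀ s : ℝ, HasDerivAt (fun s => ∫ l in a..b, Real.cos (Real.sqrt l * s) * c l)
      (∫ l in a..b, (-Real.sin (Real.sqrt l * s) * Real.sqrt l) * c l) s := by
    intro s
    exact deriv_under_int a b hab _ _ s 1
      (hcos.continuousOn.mul (hc' s)) ((hsin.continuousOn).mul (hc' s)) (hd1 s)
      s (mem_ball_self one_pos)
  have h2 : ∀ s : ℝ, HasDerivAt
      (fun s => ∫ l in a..b, (-Real.sin (Real.sqrt l * s) * Real.sqrt l) * c l)
      (∫ l in a..b, (-(Real.cos (Real.sqrt l * s) * Real.sqrt l) * Real.sqrt l) * c l) s := by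
    intro s
    exact deriv_under_int a b hab _ _ s 1
      ((hsin.continuousOn).mul (hc' s)) ((hcos2.continuousOn).mul (hc' s)) (hd2 s)
      s (mem_ball_self one_pos)
  rw [iteratedDeriv_succ, iteratedDeriv_one]
  have heq : deriv (fun s => ∫ l in a..b, Real.cos (Real.sqrt l * s) * c l)
      = fun s => ∫ l in a..b, (-Real.sin (Real.sqrt l * s) * Real.sqrt l) * c l :=
    funext fun s => (h1 s).deriv
  rw [heq, (h2 t).deriv]
  apply intervalIntegral.integral_congr
  intro l hl
  rw [uIcc_of_le hab] at hl
  have hl0 : 0 ≤ l := le_trans ha hl.1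
  show (-(Real.cos (Real.sqrt l * t) * Real.sqrt l) * Real.sqrt l) * c l
      = -(l * (Real.cos (Real.sqrt l * t) * c l))
  calc (-(Real.cos (Real.sqrt l * t) * Real.sqrt l) * Real.sqrt l) * c l
      = -((Real.sqrt l * Real.sqrt l) * (Real.cos (Real.sqrt l * t) * c l)) := by ring
    _ = -(l * (Real.cos (Real.sqrt l * t) * c l)) := by rw [Real.mul_self_sqrt hl0]

set_option maxHeartbeats 1000000 in
theorem statement_19 (D : Set (ℝ × ℝ)) (hD : IsOpen D)
    (lam₁ lam₂ : ℝ) (h1 : 0 < lam₁) (h2 : lam₁ < lam₂) (h3 : lam₂ < 1)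
    (u : ℝ → ℝ → ℝ → ℝ)
    (hcont : ContinuousOn (fun q : (ℝ × ℝ) × ℝ => u q.1.1 q.1.2 q.2)
      (D ×ˢ Set.Icc lam₁ lam₂))
    (hC2 : ∀ l ∈ Set.Icc lam₁ lam₂, ContDiffOn ℝ 2 (fun q : ℝ × ℝ => u q.1 q.2 l) D)
    (hux : ContinuousOn (fun q : (ℝ × ℝ) × ℝ => deriv (fun x' => u x' q.1.2 q.2) q.1.1)
      (D ×ˢ Set.Icc lam₁ lam₂))
    (huy : ContinuousOn (fun q : (ℝ × ℝ) × ℝ => deriv (fun y' => u q.1.1 y' q.2) q.1.2)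
      (D ×ˢ Set.Icc lam₁ lam₂))
    (huxx : ContinuousOn (fun q : (ℝ × ℝ) × ℝ =>
        iteratedDeriv 2 (fun x' => u x' q.1.2 q.2) q.1.1) (D ×ˢ Set.Icc lam₁ lam₂))
    (huxy : ContinuousOn (fun q : (ℝ × ℝ) × ℝ =>
        deriv (fun y' => deriv (fun x' => u x' y' q.2) q.1.1) q.1.2)
      (D ×ˢ Set.Icc lam₁ lam₂))
    (huyy : ContinuousOn (fun q : (ℝ × ℝ) × ℝ =>
        iteratedDeriv 2 (fun y' => u q.1.1 y' q.2) q.1.2) (D ×ˢ Set.Icc lam₁ lam₂))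
    (hspec : ∀ q ∈ D, ∀ l ∈ Set.Icc lam₁ lam₂,
      l * (iteratedDeriv 2 (fun x' => u x' q.2 l) q.1
          + iteratedDeriv 2 (fun y' => u q.1 y' l) q.2)
        = iteratedDeriv 2 (fun y' => u q.1 y' l) q.2)
    (σ : ℝ → ℝ) (hσ : ContinuousOn σ (Set.Icc lam₁ lam₂))
    (p : ℝ → ℝ → ℝ → ℝ)
    (hp : ∀ x y t : ℝ,
      p x y t = ∫ l in lam₁..lam₂, Real.cos (Real.sqrt l * t) * σ l * u x y l) :
    ∀ q ∈ D, ∀ t : ℝ,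
      iteratedDeriv 2 (fun s =>
          iteratedDeriv 2 (fun x' => p x' q.2 s) q.1
            + iteratedDeriv 2 (fun y' => p q.1 y' s) q.2) t
        + iteratedDeriv 2 (fun y' => p q.1 y' t) q.2 = 0 := by
  intro q hq t
  obtain ⟨x₀, y₀⟩ := q
  dsimp only
  have hab : lam₁ ≤ lam₂ := le_of_lt h2
  obtain ⟨ε, hε, hball⟩ : ∃ ε > 0, closedBall ((x₀, y₀) : ℝ × ℝ) ε ⊆ D := by
    rcases Metric.isOpen_iff.1 hD _ hq with ⟨r, hr, hrD⟩
    exact ⟨r / 2, by linarith, (closedBall_subset_ball (by linarith)).trans hrD⟩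
  have hmemD : ∀ x ∈ closedBall x₀ ε, ∀ y ∈ closedBall y₀ ε, ((x, y) : ℝ × ℝ) ∈ D := by
    intro x hx y hy
    apply hball
    rw [← closedBall_prod_same]
    exact ⟨hx, hy⟩
  have hx₀ : x₀ ∈ closedBall x₀ ε := mem_closedBall_self hε.le
  have hy₀ : y₀ ∈ closedBall y₀ ε := mem_closedBall_self hε.le
  have hsliceuxx : ContinuousOn (fun l => iteratedDeriv 2 (fun x' => u x' y₀ l) x₀)
      (Icc lam₁ lam₂) := by
    have h := huxx.comp (f := fun l : ℝ => ((((x₀, y₀) : ℝ × ℝ), l) : (ℝ × ℝ) × ℝ))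
      ((continuous_const.prodMk continuous_id).continuousOn) (fun l hl => ⟨hq, hl⟩)
    exact h
  have hsliceuyy : ContinuousOn (fun l => iteratedDeriv 2 (fun y' => u x₀ y' l) y₀)
      (Icc lam₁ lam₂) := by
    have h := huyy.comp (f := fun l : ℝ => ((((x₀, y₀) : ℝ × ℝ), l) : (ℝ × ℝ) × ℝ))
      ((continuous_const.prodMk continuous_id).continuousOn) (fun l hl => ⟨hq, hl⟩)
    exact h
  -- second derivative in x under the integral
  have hemb1 : Continuous fun p : ℝ × ℝ => ((((p.1, y₀) : ℝ × ℝ), p.2) : (ℝ × ℝ) × ℝ) :=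
    (continuous_fst.prodMk continuous_const).prodMk continuous_snd
  have hmaps1 : ∀ p : ℝ × ℝ, p ∈ closedBall x₀ ε ×ˢ Icc lam₁ lam₂ →
      ((((p.1, y₀) : ℝ × ℝ), p.2) : (ℝ × ℝ) × ℝ) ∈ D ×ˢ Icc lam₁ lam₂ :=
    fun p hp' => ⟨hmemD p.1 hp'.1 y₀ hy₀, hp'.2⟩
  have hemb2 : Continuous fun p : ℝ × ℝ => ((((x₀, p.1) : ℝ × ℝ), p.2) : (ℝ × ℝ) × ℝ) :=
    (continuous_const.prodMk continuous_fst).prodMk continuous_snd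
  have hmaps2 : ∀ p : ℝ × ℝ, p ∈ closedBall y₀ ε ×ˢ Icc lam₁ lam₂ →
      ((((x₀, p.1) : ℝ × ℝ), p.2) : (ℝ × ℝ) × ℝ) ∈ D ×ˢ Icc lam₁ lam₂ :=
    fun p hp' => ⟨hmemD x₀ hx₀ p.1 hp'.1, hp'.2⟩
  have hx_eq : ∀ s : ℝ, iteratedDeriv 2 (fun x' => p x' y₀ s) x₀
      = ∫ l in lam₁..lam₂,
          (Real.cos (Real.sqrt l * s) * σ l) * iteratedDeriv 2 (fun x' => u x' y₀ l) x₀ := by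
    intro s
    have hfun : (fun x' => p x' y₀ s)
        = fun x' => ∫ l in lam₁..lam₂, Real.cos (Real.sqrt l * s) * σ l * u x' y₀ l :=
      funext fun x' => hp x' y₀ s
    rw [hfun]
    have hCc : ContinuousOn (fun l => Real.cos (Real.sqrt l * s) * σ l) (Icc lam₁ lam₂) :=
      ((by fun_prop : Continuous fun l : ℝ => Real.cos (Real.sqrt l * s)).continuousOn).mul hσ
    have hg : ContinuousOn (fun q : ℝ × ℝ => u q.1 y₀ q.2)
        (closedBall x₀ ε ×ˢ Icc lam₁ lam₂) := by
      have h := hcont.comp hemb1.continuousOn hmaps1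
      exact h
    have hg1 : ContinuousOn (fun q : ℝ × ℝ => deriv (fun x => u x y₀ q.2) q.1)
        (closedBall x₀ ε ×ˢ Icc lam₁ lam₂) := by
      have h := hux.comp hemb1.continuousOn hmaps1
      exact h
    have hg2 : ContinuousOn (fun q : ℝ × ℝ => iteratedDeriv 2 (fun x => u x y₀ q.2) q.1)
        (closedBall x₀ ε ×ˢ Icc lam₁ lam₂) := by
      have h := huxx.comp hemb1.continuousOn hmaps1
      exact h
    have hreg : ∀ l ∈ Icc lam₁ lam₂, ContDiffOn ℝ 2 (fun x => u x y₀ l) (ball x₀ ε) := by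
      intro l hl
      have h := (hC2 l hl).comp
        (f := fun x : ℝ => ((x, y₀) : ℝ × ℝ)) ((contDiff_id.prodMk contDiff_const).contDiffOn)
        (fun x hx => hmemD x (ball_subset_closedBall hx) y₀ hy₀)
      exact h
    exact second_deriv_param lam₁ lam₂ hab (fun l => Real.cos (Real.sqrt l * s) * σ l)
      (fun x l => u x y₀ l) x₀ ε hε hCc hg hg1 hg2 hreg
  -- second derivative in y under the integral
  have hy_eq : ∀ s : ℝ, iteratedDeriv 2 (fun y' => p x₀ y' s) y₀
      = ∫ l in lam₁..lam₂,
          (Real.cos (Real.sqrt l * s) * σ l) * iteratedDeriv 2 (fun y' => u x₀ y' l) y₀ := by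
    intro s
    have hfun : (fun y' => p x₀ y' s)
        = fun y' => ∫ l in lam₁..lam₂, Real.cos (Real.sqrt l * s) * σ l * u x₀ y' l :=
      funext fun y' => hp x₀ y' s
    rw [hfun]
    have hCc : ContinuousOn (fun l => Real.cos (Real.sqrt l * s) * σ l) (Icc lam₁ lam₂) :=
      ((by fun_prop : Continuous fun l : ℝ => Real.cos (Real.sqrt l * s)).continuousOn).mul hσ
    have hg : ContinuousOn (fun q : ℝ × ℝ => u x₀ q.1 q.2)
        (closedBall y₀ ε ×ˢ Icc lam₁ lam₂) := by
      have h := hcont.comp hemb2.continuousOn hmaps2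
      exact h
    have hg1 : ContinuousOn (fun q : ℝ × ℝ => deriv (fun y => u x₀ y q.2) q.1)
        (closedBall y₀ ε ×ˢ Icc lam₁ lam₂) := by
      have h := huy.comp hemb2.continuousOn hmaps2
      exact h
    have hg2 : ContinuousOn (fun q : ℝ × ℝ => iteratedDeriv 2 (fun y => u x₀ y q.2) q.1)
        (closedBall y₀ ε ×ˢ Icc lam₁ lam₂) := by
      have h := huyy.comp hemb2.continuousOn hmaps2
      exact h
    have hreg : ∀ l ∈ Icc lam₁ lam₂, ContDiffOn ℝ 2 (fun y => u x₀ y l) (ball y₀ ε) := by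
      intro l hl
      have h := (hC2 l hl).comp
        (f := fun y : ℝ => ((x₀, y) : ℝ × ℝ)) ((contDiff_const.prodMk contDiff_id).contDiffOn)
        (fun y hy => hmemD x₀ hx₀ y (ball_subset_closedBall hy))
      exact h
    exact second_deriv_param lam₁ lam₂ hab (fun l => Real.cos (Real.sqrt l * s) * σ l)
      (fun y l => u x₀ y l) y₀ ε hε hCc hg hg1 hg2 hreg
  set c : ℝ → ℝ := fun l => σ l * (iteratedDeriv 2 (fun x' => u x' y₀ l) x₀
      + iteratedDeriv 2 (fun y' => u x₀ y' l) y₀) with hcdef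
  have hcc : ContinuousOn c (Icc lam₁ lam₂) := hσ.mul (hsliceuxx.add hsliceuyy)
  have hsum : (fun s => iteratedDeriv 2 (fun x' => p x' y₀ s) x₀
        + iteratedDeriv 2 (fun y' => p x₀ y' s) y₀)
      = fun s => ∫ l in lam₁..lam₂, Real.cos (Real.sqrt l * s) * c l := by
    funext s
    rw [hx_eq s, hy_eq s]
    have i1 : IntervalIntegrable (fun l => (Real.cos (Real.sqrt l * s) * σ l)
        * iteratedDeriv 2 (fun x' => u x' y₀ l) x₀) volume lam₁ lam₂ := by
      apply ContinuousOn.intervalIntegrable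
      rw [uIcc_of_le hab]
      exact (((by fun_prop : Continuous fun l : ℝ =>
        Real.cos (Real.sqrt l * s)).continuousOn).mul hσ).mul hsliceuxx
    have i2 : IntervalIntegrable (fun l => (Real.cos (Real.sqrt l * s) * σ l)
        * iteratedDeriv 2 (fun y' => u x₀ y' l) y₀) volume lam₁ lam₂ := by
      apply ContinuousOn.intervalIntegrable
      rw [uIcc_of_le hab]
      exact (((by fun_prop : Continuous fun l : ℝ =>
        Real.cos (Real.sqrt l * s)).continuousOn).mul hσ).mul hsliceuyy
    rw [← intervalIntegral.integral_add i1 i2]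
    apply intervalIntegral.integral_congr
    intro l hl
    show (Real.cos (Real.sqrt l * s) * σ l) * iteratedDeriv 2 (fun x' => u x' y₀ l) x₀
        + (Real.cos (Real.sqrt l * s) * σ l) * iteratedDeriv 2 (fun y' => u x₀ y' l) y₀
      = Real.cos (Real.sqrt l * s) * c l
    rw [hcdef]
    ring
  rw [hsum, second_deriv_time lam₁ lam₂ hab h1.le c hcc t, hy_eq t]
  have hneg : ∫ l in lam₁..lam₂, -(l * (Real.cos (Real.sqrt l * t) * c l))
      = -∫ l in lam₁..lam₂,
          (Real.cos (Real.sqrt l * t) * σ l) * iteratedDeriv 2 (fun y' => u x₀ y' l) y₀ := by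
    rw [← intervalIntegral.integral_neg]
    apply intervalIntegral.integral_congr
    intro l hl
    rw [uIcc_of_le hab] at hl
    have hs : l * (iteratedDeriv 2 (fun x' => u x' y₀ l) x₀
        + iteratedDeriv 2 (fun y' => u x₀ y' l) y₀) = iteratedDeriv 2 (fun y' => u x₀ y' l) y₀ :=
      hspec (x₀, y₀) hq l hl
    show -(l * (Real.cos (Real.sqrt l * t) * c l))
      = -((Real.cos (Real.sqrt l * t) * σ l) * iteratedDeriv 2 (fun y' => u x₀ y' l) y₀)
    rw [← hs, hcdef]
    ring
  rw [hneg]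
  exact neg_add_cancel _
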